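/- Let X₀ ≠ 0 be a real m×n matrix with rank(X₀) ≤ k, and let 𝒜 be a linear map with 𝒜(X₀) = b. For any real number α with 1/‖X₀‖_F ≤ α ≤ ‖X₀‖_{k,2}^⋆/‖X₀‖_F², the matrix Y = 0 is an optimal solution of min { ‖X₀ + Y‖_{k,2}^⋆ − α·⟨X₀, Y⟩ : 𝒜(Y) = 0 }. -/

import Mathlib

open Matrix

theorem Matrix.isHermitian_transpose_mul_self {m n : Type*} {α : Type*} [CommSemiring α]
    [StarRing α] [TrivialStar α] [Fintype m] (A : Matrix m n α) : (Aᵀ * A).IsHermitian := by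
  rw [IsHermitian, conjTranspose_mul, conjTranspose_eq_transpose_of_trivial,
    conjTranspose_eq_transpose_of_trivial, transpose_transpose]

/-- Singular values of a real `m × n` matrix, sorted in decreasing order
(indexed by `Fin n`; `σ i = sqrt` of the `i`-th largest eigenvalue of `Aᵀ * A`). -/
noncomputable def svalsDesc {m n : ℕ} (A : Matrix (Fin m) (Fin n) ℝ) : Fin n → ℝ :=
  fun i =>
    Real.sqrt
      (((Matrix.isHermitian_transpose_mul_self A).eigenvalues ∘
        Tuple.sort (Matrix.isHermitian_transpose_mul_self A).eigenvalues) i.rev)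

/-- Ky Fan 2-k-norm: `(∑_{i=1}^k σ_i(A)²)^{1/2}`. -/
noncomputable def kyFan2 {m n : ℕ} (k : ℕ) (A : Matrix (Fin m) (Fin n) ℝ) : ℝ :=
  Real.sqrt (∑ i ∈ Finset.univ.filter (fun i : Fin n => (i : ℕ) < k), (svalsDesc A i) ^ 2)

/-- Frobenius inner product `⟨A, B⟩ = trace (Aᵀ B)`. -/
noncomputable def frobInner {m n : ℕ} (A B : Matrix (Fin m) (Fin n) ℝ) : ℝ :=
  ∑ i, ∑ j, A i j * B i j

/-- Frobenius norm. -/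
noncomputable def frobNorm {m n : ℕ} (A : Matrix (Fin m) (Fin n) ℝ) : ℝ :=
  Real.sqrt (∑ i, ∑ j, (A i j) ^ 2)

/-- Dual Ky Fan 2-k-norm `‖A‖_{k,2}^⋆ = max {⟨A,X⟩ : ‖X‖_{k,2} ≤ 1}`. -/
noncomputable def kyFan2Dual {m n : ℕ} (k : ℕ) (A : Matrix (Fin m) (Fin n) ℝ) : ℝ :=
  sSup {c : ℝ | ∃ X : Matrix (Fin m) (Fin n) ℝ, kyFan2 k X ≤ 1 ∧ c = frobInner A X}

/-- The linear map `𝒜` satisfies the restricted isometry inequality with constant `δ`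
for all matrices of rank at most `r`. -/
def HasRIP {m n p : ℕ} (𝒜 : Matrix (Fin m) (Fin n) ℝ →ₗ[ℝ] EuclideanSpace ℝ (Fin p))
    (r : ℕ) (δ : ℝ) : Prop :=
  ∀ X : Matrix (Fin m) (Fin n) ℝ, X.rank ≤ r →
    (1 - δ) * frobNorm X ≤ ‖𝒜 X‖ ∧ ‖𝒜 X‖ ≤ (1 + δ) * frobNorm X

namespace Aux

variable {m n : ℕ}

/-- sorted eigenvalues of `Aᴴ * A`, increasing -/
noncomputable def mu (A : Matrix (Fin m) (Fin n) ℝ) : Fin n → ℝ :=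
  (Matrix.isHermitian_transpose_mul_self A).eigenvalues ∘
    Tuple.sort (Matrix.isHermitian_transpose_mul_self A).eigenvalues

lemma mu_nonneg (A : Matrix (Fin m) (Fin n) ℝ) (i : Fin n) : 0 ≤ mu A i :=
  Matrix.eigenvalues_conjTranspose_mul_self_nonneg A _

lemma mu_monotone (A : Matrix (Fin m) (Fin n) ℝ) : Monotone (mu A) :=
  Tuple.monotone_sort _

lemma svals_sq (A : Matrix (Fin m) (Fin n) ℝ) (i : Fin n) :
    svalsDesc A i ^ 2 = mu A i.rev :=
  Real.sq_sqrt (mu_nonneg A i.rev)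

lemma frobNorm_nonneg (A : Matrix (Fin m) (Fin n) ℝ) : 0 ≤ frobNorm A := Real.sqrt_nonneg _

lemma frobNorm_sq (A : Matrix (Fin m) (Fin n) ℝ) :
    frobNorm A ^ 2 = ∑ i, ∑ j, (A i j) ^ 2 :=
  Real.sq_sqrt (Finset.sum_nonneg fun _ _ => Finset.sum_nonneg fun _ _ => sq_nonneg _)

lemma frobInner_self (A : Matrix (Fin m) (Fin n) ℝ) : frobInner A A = frobNorm A ^ 2 := by
  rw [frobNorm_sq]; simp [frobInner, sq]

lemma sum_eigs_eq (A : Matrix (Fin m) (Fin n) ℝ) :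
    ∑ i, (Matrix.isHermitian_transpose_mul_self A).eigenvalues i = ∑ i, ∑ j, (A i j) ^ 2 := by
  have h1 : (Aᴴ * A).trace = ∑ i, (Matrix.isHermitian_transpose_mul_self A).eigenvalues i := by
    rw [show Aᴴ = Aᵀ from conjTranspose_eq_transpose_of_trivial A]
    nth_rewrite 1 [(Matrix.isHermitian_transpose_mul_self A).spectral_theorem]
    rw [Unitary.conjStarAlgAut_apply]
    rw [Matrix.trace_mul_comm, ← Matrix.mul_assoc]
    simp [Matrix.trace_diagonal]
  rw [← h1]
  simp only [Matrix.trace, Matrix.mul_apply, Matrix.diag, Matrix.conjTranspose_apply,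
    star_trivial, sq]
  rw [Finset.sum_comm]

lemma sum_mu_all (A : Matrix (Fin m) (Fin n) ℝ) :
    ∑ i, mu A i = ∑ i, ∑ j, (A i j) ^ 2 := by
  rw [← sum_eigs_eq A]
  exact Equiv.sum_comp (Tuple.sort _) _

lemma sum_sq_svals_all (A : Matrix (Fin m) (Fin n) ℝ) :
    ∑ i, svalsDesc A i ^ 2 = ∑ i, ∑ j, (A i j) ^ 2 := by
  rw [← sum_mu_all A]
  calc ∑ i, svalsDesc A i ^ 2 = ∑ i, mu A i.rev :=
        Finset.sum_congr rfl fun i _ => svals_sq A i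
    _ = ∑ i, mu A i := Fintype.sum_equiv Fin.revPerm _ _ fun i => rfl

lemma kyFan2_nonneg (k : ℕ) (A : Matrix (Fin m) (Fin n) ℝ) : 0 ≤ kyFan2 k A :=
  Real.sqrt_nonneg _

lemma kyFan2_le_frobNorm (k : ℕ) (A : Matrix (Fin m) (Fin n) ℝ) :
    kyFan2 k A ≤ frobNorm A := by
  rw [kyFan2, frobNorm, ← sum_sq_svals_all A]
  exact Real.sqrt_le_sqrt (Finset.sum_le_univ_sum_of_nonneg fun _ => sq_nonneg _)

lemma kyFan2_sq (k : ℕ) (A : Matrix (Fin m) (Fin n) ℝ) :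
    kyFan2 k A ^ 2 = ∑ j ∈ Finset.univ.filter (fun j : Fin n => n ≤ (j : ℕ) + k), mu A j := by
  rw [kyFan2, Real.sq_sqrt (Finset.sum_nonneg fun _ _ => sq_nonneg _)]
  rw [Finset.sum_congr rfl (fun i _ => svals_sq A i)]
  refine Finset.sum_nbij' (fun i => i.rev) (fun j => j.rev) ?_ ?_
    (fun i _ => i.rev_rev) (fun j _ => j.rev_rev) (fun i _ => rfl)
  · intro i hi
    simp only [Finset.mem_filter, Finset.mem_univ, true_and] at hi ⊢
    have h1 := i.isLt
    rw [Fin.val_rev]; omega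
  · intro j hj
    simp only [Finset.mem_filter, Finset.mem_univ, true_and] at hj ⊢
    have h1 := j.isLt
    rw [Fin.val_rev]; omega

end Aux


lemma topk {n k : ℕ} (hk1 : 1 ≤ k) (hkn : k ≤ n) (μ d : Fin n → ℝ)
    (hmono : Monotone μ) (hμ0 : ∀ i, 0 ≤ μ i) (hd0 : ∀ i, 0 ≤ d i) (hd1 : ∀ i, d i ≤ 1)
    (hsum : ∑ i, d i ≤ (k : ℝ)) :
    ∑ i, μ i * d i ≤ ∑ j ∈ Finset.univ.filter (fun j : Fin n => n ≤ (j : ℕ) + k), μ j := by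
  classical
  have hn : 0 < n := lt_of_lt_of_le hk1 hkn
  set s : Finset (Fin n) := Finset.univ.filter (fun j : Fin n => n ≤ (j : ℕ) + k) with hs
  set T : ℝ := μ ⟨n - k, by omega⟩ with hT
  have hT0 : 0 ≤ T := hμ0 _
  have hcard : s.card = k := by
    rw [show k = (Finset.Ico (n - k) n).card by rw [Nat.card_Ico]; omega]
    apply Finset.card_bij (fun (j : Fin n) _ => (j : ℕ))
    · intro j hj
      simp only [hs, Finset.mem_filter, Finset.mem_univ, true_and] at hj
      have := j.isLt
      simp only [Finset.mem_Ico]; omega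
    · intro a ha b hb hab; exact Fin.val_injective hab
    · intro a ha
      simp only [Finset.mem_Ico] at ha
      refine ⟨⟨a, by omega⟩, ?_, rfl⟩
      simp only [hs, Finset.mem_filter, Finset.mem_univ, true_and]; omega
  have hTle : ∀ j ∈ s, T ≤ μ j := by
    intro j hj
    simp only [hs, Finset.mem_filter, Finset.mem_univ, true_and] at hj
    exact hmono (by simp only [Fin.mk_le_mk, Fin.le_def]; omega)
  have hleT : ∀ j ∈ sᶜ, μ j ≤ T := by
    intro j hj
    simp only [hs, Finset.mem_compl, Finset.mem_filter, Finset.mem_univ, true_and, not_le] at hj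
    exact hmono (by simp only [Fin.le_def]; omega)
  have split : ∑ i, μ i * d i = ∑ i ∈ s, μ i * d i + ∑ i ∈ sᶜ, μ i * d i :=
    (Finset.sum_add_sum_compl s _).symm
  have b1 : ∑ i ∈ sᶜ, μ i * d i ≤ T * ∑ i ∈ sᶜ, d i := by
    rw [Finset.mul_sum]
    exact Finset.sum_le_sum fun j hj => mul_le_mul_of_nonneg_right (hleT j hj) (hd0 j)
  have b2 : ∑ i ∈ s, μ i * d i ≤ (∑ i ∈ s, (μ i - T)) + T * ∑ i ∈ s, d i := by
    rw [Finset.mul_sum, ← Finset.sum_add_distrib]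
    refine Finset.sum_le_sum fun j hj => ?_
    have h1 := hTle j hj
    have h2 := hd0 j
    have h3 := hd1 j
    nlinarith
  have b3 : ∑ i ∈ s, (μ i - T) = ∑ i ∈ s, μ i - k * T := by
    rw [Finset.sum_sub_distrib, Finset.sum_const, hcard, nsmul_eq_mul]
  have b4 : ∑ i ∈ s, d i + ∑ i ∈ sᶜ, d i ≤ (k : ℝ) := by
    rw [Finset.sum_add_sum_compl]; exact hsum
  have b5 : T * (∑ i ∈ s, d i + ∑ i ∈ sᶜ, d i) ≤ T * k := mul_le_mul_of_nonneg_left b4 hT0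
  rw [split]
  rw [b3] at b2
  nlinarith [b2, b1, b5]


namespace Aux
variable {m n : ℕ}

lemma frobInner_le (A B : Matrix (Fin m) (Fin n) ℝ) :
    frobInner A B ≤ frobNorm A * frobNorm B := by
  have h := Real.sum_mul_le_sqrt_mul_sqrt (Finset.univ : Finset (Fin m × Fin n))
    (fun p => A p.1 p.2) (fun p => B p.1 p.2)
  rw [frobInner, frobNorm, frobNorm]
  simpa [Fintype.sum_prod_type] using h

lemma frobNorm_pos (A : Matrix (Fin m) (Fin n) ℝ) (hA : A ≠ 0) : 0 < frobNorm A := by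
  obtain ⟨i, j, hij⟩ : ∃ i j, A i j ≠ 0 := by
    by_contra h
    push_neg at h
    exact hA (by ext i j; simp [h])
  apply Real.sqrt_pos.2
  have h1 : (0:ℝ) < A i j ^ 2 := by positivity
  have h2 : A i j ^ 2 ≤ ∑ j', A i j' ^ 2 :=
    Finset.single_le_sum (f := fun j' => A i j' ^ 2) (fun _ _ => sq_nonneg _) (Finset.mem_univ j)
  have h3 : ∑ j', A i j' ^ 2 ≤ ∑ i', ∑ j', A i' j' ^ 2 :=
    Finset.single_le_sum (f := fun i' => ∑ j', A i' j' ^ 2)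
      (fun _ _ => Finset.sum_nonneg fun _ _ => sq_nonneg _) (Finset.mem_univ i)
  linarith

lemma frobNorm_smul (c : ℝ) (hc : 0 ≤ c) (A : Matrix (Fin m) (Fin n) ℝ) :
    frobNorm (c • A) = c * frobNorm A := by
  rw [frobNorm, frobNorm]
  have : ∀ i j, ((c • A) i j) ^ 2 = c ^ 2 * A i j ^ 2 := by
    intro i j; simp [Matrix.smul_apply, smul_eq_mul]; ring
  simp_rw [this, ← Finset.mul_sum]
  rw [Real.sqrt_mul (sq_nonneg c), Real.sqrt_sq hc]

lemma frobInner_add_right (A B C : Matrix (Fin m) (Fin n) ℝ) :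
    frobInner (A + B) C = frobInner A C + frobInner B C := by
  simp [frobInner, Matrix.add_apply, add_mul, Finset.sum_add_distrib]

lemma frobInner_smul_right (c : ℝ) (A B : Matrix (Fin m) (Fin n) ℝ) :
    frobInner A (c • B) = c * frobInner A B := by
  simp only [frobInner, Matrix.smul_apply, smul_eq_mul, Finset.mul_sum]
  congr 1; ext i; congr 1; ext j; ring

lemma frobInner_comm (A B : Matrix (Fin m) (Fin n) ℝ) :
    frobInner A B = frobInner B A := by
  simp only [frobInner]; congr 1; ext i; congr 1; ext j; ring

lemma frobNorm_le_sqrt_mul_kyFan2 {k : ℕ} (hk1 : 1 ≤ k) (hn : 0 < n)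
    (A : Matrix (Fin m) (Fin n) ℝ) :
    frobNorm A ≤ Real.sqrt n * kyFan2 k A := by
  have hlast : mu A ⟨n - 1, by omega⟩ ≤ kyFan2 k A ^ 2 := by
    rw [kyFan2_sq]
    refine Finset.single_le_sum (fun i _ => mu_nonneg A i) ?_
    simp only [Finset.mem_filter, Finset.mem_univ, true_and]; omega
  have h1 : frobNorm A ^ 2 ≤ n * kyFan2 k A ^ 2 := by
    rw [frobNorm_sq, ← sum_mu_all A]
    calc ∑ i, mu A i ≤ ∑ _i : Fin n, mu A ⟨n - 1, by omega⟩ := by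
          refine Finset.sum_le_sum fun i _ => ?_
          refine mu_monotone A ?_
          have := i.isLt
          simp only [Fin.le_def]; omega
      _ = n * mu A ⟨n - 1, by omega⟩ := by
          rw [Finset.sum_const, Finset.card_univ, Fintype.card_fin, nsmul_eq_mul]
      _ ≤ n * kyFan2 k A ^ 2 := by
          exact mul_le_mul_of_nonneg_left hlast (by positivity)
  have h2 : frobNorm A = Real.sqrt (frobNorm A ^ 2) := by
    rw [Real.sqrt_sq (frobNorm_nonneg A)]
  rw [h2]
  calc Real.sqrt (frobNorm A ^ 2) ≤ Real.sqrt (n * kyFan2 k A ^ 2) := Real.sqrt_le_sqrt h1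
    _ = Real.sqrt n * kyFan2 k A := by
        rw [Real.sqrt_mul (by positivity), Real.sqrt_sq (kyFan2_nonneg k A)]

end Aux


lemma exists_proj {m n k : ℕ} (X₀ : Matrix (Fin m) (Fin n) ℝ) (hr : X₀.rank ≤ k) :
    ∃ P : Matrix (Fin n) (Fin n) ℝ,
      Pᵀ = P ∧ P * P = P ∧ X₀ * P = X₀ ∧ P.trace ≤ (k : ℝ) ∧
      (∀ v : Fin n → ℝ, ∑ a, ∑ c, v a * P a c * v c ≤ ∑ a, v a ^ 2) ∧
      (∀ v : Fin n → ℝ, 0 ≤ ∑ a, ∑ c, v a * P a c * v c) := by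
  classical
  set K : Submodule ℝ (EuclideanSpace ℝ (Fin n)) := Submodule.span ℝ (Set.range (fun i => WithLp.toLp 2 (X₀ i))) with hK
  have hfinrank : Module.finrank ℝ K = X₀.rank := by
    rw [← Matrix.rank_transpose, Matrix.rank_eq_finrank_span_cols,
      ← LinearEquiv.finrank_map_eq (WithLp.linearEquiv 2 ℝ (Fin n → ℝ)).symm, Submodule.map_span,
      ← Set.range_comp]
    rfl
  set b := stdOrthonormalBasis ℝ K with hb
  set r := Module.finrank ℝ K with hrdef
  set w : Fin r → (Fin n → ℝ) := fun j => ((b j : K) : EuclideanSpace ℝ (Fin n)) with hwdef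
  have hw : Orthonormal ℝ (fun j => ((b j : K) : EuclideanSpace ℝ (Fin n))) :=
    b.orthonormal.comp_linearIsometry K.subtypeₗᵢ
  have hinner : ∀ (x y : EuclideanSpace ℝ (Fin n)), (inner ℝ x y : ℝ) = ∑ a, x a * y a := by
    intro x y; simp [PiLp.inner_apply, RCLike.inner_apply, conj_trivial, mul_comm]
  have hwinner : ∀ j j', ∑ a, w j a * w j' a = if j = j' then 1 else 0 := by
    intro j j'
    rw [← hinner, orthonormal_iff_ite.mp hw j j']
  have hq : ∀ v : Fin n → ℝ,
      ∑ a, ∑ c, v a * (∑ j, w j a * w j c) * v c = ∑ j, (∑ a, w j a * v a) ^ 2 := by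
    intro v
    calc ∑ a, ∑ c, v a * (∑ j, w j a * w j c) * v c
        = ∑ a, ∑ c, ∑ j, (w j a * v a) * (w j c * v c) := by
          refine Finset.sum_congr rfl fun a _ => Finset.sum_congr rfl fun c _ => ?_
          rw [Finset.mul_sum, Finset.sum_mul]
          exact Finset.sum_congr rfl fun j _ => by ring
      _ = ∑ a, ∑ j, ∑ c, (w j a * v a) * (w j c * v c) :=
          Finset.sum_congr rfl fun a _ => Finset.sum_comm
      _ = ∑ j, ∑ a, ∑ c, (w j a * v a) * (w j c * v c) := Finset.sum_comm
      _ = ∑ j, (∑ a, w j a * v a) * (∑ c, w j c * v c) := by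
          refine Finset.sum_congr rfl fun j _ => ?_
          rw [Finset.sum_mul_sum]
      _ = ∑ j, (∑ a, w j a * v a) ^ 2 := by
          refine Finset.sum_congr rfl fun j _ => (sq _).symm
  refine ⟨Matrix.of fun a c => ∑ j, w j a * w j c, ?_, ?_, ?_, ?_, ?_, ?_⟩
  · ext a c
    simp only [Matrix.transpose_apply, Matrix.of_apply]
    exact Finset.sum_congr rfl fun j _ => mul_comm _ _
  · ext a c
    simp only [Matrix.mul_apply, Matrix.of_apply]
    calc ∑ e, (∑ j, w j a * w j e) * (∑ j', w j' e * w j' c)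
        = ∑ e, ∑ j, ∑ j', (w j a * w j' c) * (w j e * w j' e) := by
          refine Finset.sum_congr rfl fun e _ => ?_
          rw [Finset.sum_mul_sum]
          exact Finset.sum_congr rfl fun j _ => Finset.sum_congr rfl fun j' _ => by ring
      _ = ∑ j, ∑ j', (w j a * w j' c) * (∑ e, w j e * w j' e) := by
          rw [Finset.sum_comm]
          refine Finset.sum_congr rfl fun j _ => ?_
          rw [Finset.sum_comm]
          exact Finset.sum_congr rfl fun j' _ => (Finset.mul_sum _ _ _).symm
      _ = ∑ j, ∑ j', (w j a * w j' c) * (if j = j' then (1:ℝ) else 0) := by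
          refine Finset.sum_congr rfl fun j _ => Finset.sum_congr rfl fun j' _ => ?_
          rw [hwinner j j']
      _ = ∑ j, w j a * w j c := by
          refine Finset.sum_congr rfl fun j _ => ?_
          simp [Finset.sum_ite_eq]
  · ext i c
    simp only [Matrix.mul_apply, Matrix.of_apply]
    have hv : WithLp.toLp 2 (X₀ i) ∈ K := Submodule.subset_span ⟨i, rfl⟩
    set x : K := ⟨WithLp.toLp 2 (X₀ i), hv⟩ with hx
    have hrepr := b.sum_repr x
    have hco : ∀ j, b.repr x j = ∑ a, w j a * X₀ i a := by
      intro j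
      rw [b.repr_apply_apply, Submodule.coe_inner, hinner]
    have h1 : ((↑(∑ j, b.repr x j • b j) : EuclideanSpace ℝ (Fin n)) c) = X₀ i c := by
      rw [hrepr]
    have hcoe : ((↑(∑ j, b.repr x j • b j) : EuclideanSpace ℝ (Fin n)) c)
        = ∑ j, b.repr x j * w j c := by
      rw [Submodule.coe_sum, WithLp.ofLp_sum]
      exact (Finset.sum_apply c Finset.univ _).trans
        (Finset.sum_congr rfl fun j _ => rfl)
    calc ∑ a, X₀ i a * ∑ j, w j a * w j c
        = ∑ a, ∑ j, (w j a * X₀ i a) * w j c := by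
          refine Finset.sum_congr rfl fun a _ => ?_
          rw [Finset.mul_sum]
          exact Finset.sum_congr rfl fun j _ => by ring
      _ = ∑ j, ∑ a, (w j a * X₀ i a) * w j c := Finset.sum_comm
      _ = ∑ j, (∑ a, w j a * X₀ i a) * w j c :=
          Finset.sum_congr rfl fun j _ => (Finset.sum_mul _ _ _).symm
      _ = ∑ j, b.repr x j * w j c := Finset.sum_congr rfl fun j _ => by rw [hco]
      _ = X₀ i c := by rw [← hcoe, h1]
  · have htr : Matrix.trace (Matrix.of fun a c => ∑ j, w j a * w j c)
        = (r : ℝ) := by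
      calc Matrix.trace (Matrix.of fun a c => ∑ j, w j a * w j c)
          = ∑ a, ∑ j, w j a * w j a := rfl
        _ = ∑ j, ∑ a, w j a * w j a := Finset.sum_comm
        _ = ∑ j : Fin r, (1:ℝ) := by
            refine Finset.sum_congr rfl fun j _ => ?_
            rw [hwinner j j]; simp
        _ = (r : ℝ) := by simp
    rw [htr]
    have : r ≤ k := hfinrank ▸ hr
    exact_mod_cast this
  · intro v
    simp only [Matrix.of_apply]
    rw [hq v]
    let v' : EuclideanSpace ℝ (Fin n) := WithLp.toLp 2 v
    have hb2 := hw.sum_inner_products_le (𝕜 := ℝ) (s := Finset.univ) v'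
    have hnorm : ‖v'‖ ^ 2 = ∑ a, v a ^ 2 := by
      rw [← real_inner_self_eq_norm_sq, hinner]
      exact Finset.sum_congr rfl fun a _ => (sq (v a)).symm
    calc ∑ j, (∑ a, w j a * v a) ^ 2
        = ∑ j, ‖(inner ℝ ((b j : K) : EuclideanSpace ℝ (Fin n)) v' : ℝ)‖ ^ 2 := by
          refine Finset.sum_congr rfl fun j _ => ?_
          rw [hinner, Real.norm_eq_abs, sq_abs]
      _ ≤ ‖v'‖ ^ 2 := hb2
      _ = ∑ a, v a ^ 2 := hnorm
  · intro v
    simp only [Matrix.of_apply]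
    rw [hq v]
    exact Finset.sum_nonneg fun j _ => sq_nonneg _

open Aux in
lemma trace_SP_le {m n k : ℕ} (hk1 : 1 ≤ k) (hkn : k ≤ n) (X : Matrix (Fin m) (Fin n) ℝ)
    (P : Matrix (Fin n) (Fin n) ℝ) (htr : P.trace ≤ (k : ℝ))
    (hub : ∀ v : Fin n → ℝ, ∑ a, ∑ c, v a * P a c * v c ≤ ∑ a, v a ^ 2)
    (hlb : ∀ v : Fin n → ℝ, 0 ≤ ∑ a, ∑ c, v a * P a c * v c) :
    Matrix.trace (Xᵀ * X * P) ≤ kyFan2 k X ^ 2 := by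
  classical
  have hS : (Xᴴ * X).IsHermitian := Matrix.isHermitian_transpose_mul_self X
  set eig : Fin n → ℝ := hS.eigenvalues with heig
  set V : Matrix (Fin n) (Fin n) ℝ := (hS.eigenvectorUnitary : Matrix (Fin n) (Fin n) ℝ) with hV
  have hVV : V * star V = 1 := (Matrix.mem_unitaryGroup_iff).mp (hS.eigenvectorUnitary).2
  have hVV' : star V * V = 1 := (Matrix.mem_unitaryGroup_iff').mp (hS.eigenvectorUnitary).2
  have hXT : Xᴴ = Xᵀ := by
    ext i j; simp [Matrix.conjTranspose_apply, star_trivial]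
  have hofReal : (RCLike.ofReal ∘ eig : Fin n → ℝ) = eig := by
    ext i; simp
  have hspec : Xᴴ * X = V * Matrix.diagonal eig * star V := by
    nth_rewrite 1 [hS.spectral_theorem]
    rw [hofReal, Unitary.conjStarAlgAut_apply]
  set cc : Fin n → ℝ := fun i => ∑ a, ∑ e, V a i * P a e * V e i with hcc
  have hM : ∀ i, (star V * P * V) i i = cc i := by
    intro i
    simp only [Matrix.mul_apply, Matrix.star_apply, star_trivial]
    calc ∑ x, (∑ x1, V x1 i * P x1 x) * V x i
        = ∑ x, ∑ x1, V x1 i * P x1 x * V x i :=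
          Finset.sum_congr rfl fun x _ => Finset.sum_mul _ _ _
      _ = ∑ x1, ∑ x, V x1 i * P x1 x * V x i := Finset.sum_comm
  have hA : Matrix.trace (Xᵀ * X * P) = ∑ i, eig i * cc i := by
    rw [← hXT, hspec]
    calc Matrix.trace (V * Matrix.diagonal eig * star V * P)
        = Matrix.trace ((V * Matrix.diagonal eig) * (star V * P)) := by
          rw [Matrix.mul_assoc]
      _ = Matrix.trace ((star V * P) * (V * Matrix.diagonal eig)) := Matrix.trace_mul_comm _ _
      _ = Matrix.trace ((star V * P * V) * Matrix.diagonal eig) := by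
          rw [← Matrix.mul_assoc]
      _ = ∑ i, eig i * cc i := by
          rw [Matrix.trace]
          refine Finset.sum_congr rfl fun i _ => ?_
          rw [Matrix.diag]
          rw [Matrix.mul_diagonal]
          rw [hM i]
          ring
  have hsum : ∑ i, cc i ≤ (k : ℝ) := by
    have h1 : ∑ i, cc i = Matrix.trace (star V * P * V) := by
      rw [Matrix.trace]
      exact (Finset.sum_congr rfl fun i _ => (hM i).symm)
    rw [h1]
    calc Matrix.trace (star V * P * V) = Matrix.trace ((P * V) * star V) := by
          rw [Matrix.mul_assoc, Matrix.trace_mul_comm]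
      _ = Matrix.trace (P * (V * star V)) := by rw [Matrix.mul_assoc]
      _ = Matrix.trace P := by rw [hVV, Matrix.mul_one]
      _ ≤ (k : ℝ) := htr
  have hcol : ∀ i, ∑ a, (V a i) ^ 2 = 1 := by
    intro i
    have h1 : (star V * V) i i = 1 := by rw [hVV']; simp
    rw [Matrix.mul_apply] at h1
    simp only [Matrix.star_apply, star_trivial] at h1
    rw [← h1]
    exact Finset.sum_congr rfl fun a _ => sq (V a i)
  have hub' : ∀ i, cc i ≤ 1 := fun i => (hub fun a => V a i).trans_eq (hcol i)
  have hlb' : ∀ i, 0 ≤ cc i := fun i => hlb fun a => V a i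
  rw [hA, kyFan2_sq]
  set σ := Tuple.sort eig with hσ
  have hre : ∑ i, eig i * cc i = ∑ i, mu X i * (cc ∘ σ) i :=
    (Equiv.sum_comp σ (fun i => eig i * cc i)).symm
  rw [hre]
  have hsum' : ∑ i, (cc ∘ σ) i ≤ (k : ℝ) := by
    show ∑ i, cc (σ i) ≤ (k : ℝ)
    exact le_of_eq_of_le (Equiv.sum_comp σ cc) hsum
  exact topk hk1 hkn (mu X) (cc ∘ σ) (mu_monotone X) (mu_nonneg X)
    (fun i => hlb' (σ i)) (fun i => hub' (σ i)) hsum'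

namespace Aux
variable {m n : ℕ}

lemma frobInner_eq_trace (A B : Matrix (Fin m) (Fin n) ℝ) :
    frobInner A B = Matrix.trace (Aᵀ * B) := by
  rw [frobInner, Matrix.trace]
  rw [Finset.sum_comm]
  refine Finset.sum_congr rfl fun j _ => ?_
  rw [Matrix.diag, Matrix.mul_apply]
  exact Finset.sum_congr rfl fun i _ => rfl

lemma key_inner_le {k : ℕ} (hk1 : 1 ≤ k) (hkn : k ≤ n)
    (X₀ X : Matrix (Fin m) (Fin n) ℝ) (hr : X₀.rank ≤ k) :
    frobInner X₀ X ≤ frobNorm X₀ * kyFan2 k X := by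
  obtain ⟨P, hPT, hPP, hXP, htr, hub, hlb⟩ := exists_proj X₀ hr
  have h1 : frobInner X₀ X = frobInner X₀ (X * P) := by
    rw [frobInner_eq_trace, frobInner_eq_trace]
    conv_lhs => rw [← hXP]
    rw [Matrix.transpose_mul, hPT]
    calc Matrix.trace (P * X₀ᵀ * X) = Matrix.trace (P * (X₀ᵀ * X)) := by rw [Matrix.mul_assoc]
      _ = Matrix.trace ((X₀ᵀ * X) * P) := Matrix.trace_mul_comm _ _
      _ = Matrix.trace (X₀ᵀ * (X * P)) := by rw [Matrix.mul_assoc]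
  have h3 : frobNorm (X * P) ≤ kyFan2 k X := by
    have hsq : frobNorm (X * P) ^ 2 ≤ kyFan2 k X ^ 2 := by
      have he : frobNorm (X * P) ^ 2 = Matrix.trace (Xᵀ * X * P) := by
        rw [← frobInner_self, frobInner_eq_trace]
        rw [Matrix.transpose_mul, hPT]
        calc Matrix.trace (P * Xᵀ * (X * P))
            = Matrix.trace ((P * (Xᵀ * X)) * P) := by
              rw [Matrix.mul_assoc, Matrix.mul_assoc, Matrix.mul_assoc]
          _ = Matrix.trace (P * ((Xᵀ * X) * P)) := by rw [Matrix.mul_assoc]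
          _ = Matrix.trace (((Xᵀ * X) * P) * P) := Matrix.trace_mul_comm _ _
          _ = Matrix.trace ((Xᵀ * X) * (P * P)) := by rw [Matrix.mul_assoc]
          _ = Matrix.trace (Xᵀ * X * P) := by rw [hPP]
      rw [he]
      exact trace_SP_le hk1 hkn X P htr hub hlb
    have h4 := Real.sqrt_le_sqrt hsq
    rwa [Real.sqrt_sq (frobNorm_nonneg _), Real.sqrt_sq (kyFan2_nonneg _ _)] at h4
  calc frobInner X₀ X = frobInner X₀ (X * P) := h1
    _ ≤ frobNorm X₀ * frobNorm (X * P) := frobInner_le _ _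
    _ ≤ frobNorm X₀ * kyFan2 k X := mul_le_mul_of_nonneg_left h3 (frobNorm_nonneg _)

lemma dual_bddAbove {k : ℕ} (hk1 : 1 ≤ k) (hn : 0 < n) (A : Matrix (Fin m) (Fin n) ℝ) :
    BddAbove {c : ℝ | ∃ X : Matrix (Fin m) (Fin n) ℝ, kyFan2 k X ≤ 1 ∧ c = frobInner A X} := by
  refine ⟨frobNorm A * Real.sqrt n, fun c hc => ?_⟩
  obtain ⟨X, hX, rfl⟩ := hc
  calc frobInner A X ≤ frobNorm A * frobNorm X := frobInner_le A X
    _ ≤ frobNorm A * (Real.sqrt n * kyFan2 k X) :=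
        mul_le_mul_of_nonneg_left (frobNorm_le_sqrt_mul_kyFan2 hk1 hn X) (frobNorm_nonneg A)
    _ ≤ frobNorm A * (Real.sqrt n * 1) := by
        refine mul_le_mul_of_nonneg_left ?_ (frobNorm_nonneg A)
        exact mul_le_mul_of_nonneg_left hX (Real.sqrt_nonneg _)
    _ = frobNorm A * Real.sqrt n := by ring

lemma frobNorm_zero : frobNorm (0 : Matrix (Fin m) (Fin n) ℝ) = 0 := by
  rw [frobNorm]
  simp

end Aux

open Aux in
/-- for `X₀ ≠ 0` of rank ≤ k and any `α` with
`1/‖X₀‖_F ≤ α ≤ ‖X₀‖_{k,2}^⋆/‖X₀‖_F²`, `Y = 0` is optimal for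
`min {‖X₀+Y‖_{k,2}^⋆ − α⟨X₀,Y⟩ : 𝒜 Y = 0}`. -/
theorem zero_optimal_for_alpha {m n p k : ℕ} (hk1 : 1 ≤ k) (hk : k ≤ min m n)
    (X₀ : Matrix (Fin m) (Fin n) ℝ) (hX0 : X₀ ≠ 0) (hr : X₀.rank ≤ k)
    (𝒜 : Matrix (Fin m) (Fin n) ℝ →ₗ[ℝ] EuclideanSpace ℝ (Fin p))
    (b : EuclideanSpace ℝ (Fin p)) (hA : 𝒜 X₀ = b)
    (α : ℝ) (hα1 : 1 / frobNorm X₀ ≤ α) (hα2 : α ≤ kyFan2Dual k X₀ / frobNorm X₀ ^ 2) :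
    ∀ Y : Matrix (Fin m) (Fin n) ℝ, 𝒜 Y = 0 →
      kyFan2Dual k X₀ ≤ kyFan2Dual k (X₀ + Y) - α * frobInner X₀ Y := by
  intro Y _
  have hkn : k ≤ n := le_trans hk (min_le_right m n)
  have hn : 0 < n := lt_of_lt_of_le hk1 hkn
  set c := frobNorm X₀ with hcdef
  have hc : 0 < c := frobNorm_pos X₀ hX0
  -- upper bound on the dual norm
  have hD_le : kyFan2Dual k X₀ ≤ c := by
    apply Real.sSup_le _ hc.le
    rintro x ⟨X, hX, rfl⟩
    calc frobInner X₀ X ≤ frobNorm X₀ * kyFan2 k X := key_inner_le hk1 hkn X₀ X hr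
      _ ≤ c * 1 := mul_le_mul_of_nonneg_left hX hc.le
      _ = c := mul_one c
  -- α is exactly 1/c
  have hα : α = 1 / c := by
    refine le_antisymm ?_ hα1
    calc α ≤ kyFan2Dual k X₀ / c ^ 2 := hα2
      _ ≤ c / c ^ 2 := div_le_div_of_nonneg_right hD_le (by positivity)
      _ = 1 / c := by field_simp
  -- lower bound on the dual norm at X₀ + Y
  set Z : Matrix (Fin m) (Fin n) ℝ := c⁻¹ • X₀ with hZ
  have hZfeas : kyFan2 k Z ≤ 1 := by
    calc kyFan2 k Z ≤ frobNorm Z := kyFan2_le_frobNorm k Z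
      _ = c⁻¹ * c := by rw [hZ, frobNorm_smul c⁻¹ (by positivity) X₀]
      _ = 1 := inv_mul_cancel₀ hc.ne'
  have hmem : frobInner (X₀ + Y) Z ∈
      {x : ℝ | ∃ X : Matrix (Fin m) (Fin n) ℝ, kyFan2 k X ≤ 1 ∧ x = frobInner (X₀ + Y) X} :=
    ⟨Z, hZfeas, rfl⟩
  have hge : frobInner (X₀ + Y) Z ≤ kyFan2Dual k (X₀ + Y) :=
    le_csSup (dual_bddAbove hk1 hn (X₀ + Y)) hmem
  have hval : frobInner (X₀ + Y) Z = c + c⁻¹ * frobInner X₀ Y := by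
    rw [hZ, frobInner_smul_right, frobInner_add_right, frobInner_self]
    rw [frobInner_comm Y X₀]
    field_simp
    ring
  rw [hval] at hge
  rw [hα]
  have : (1 / c) * frobInner X₀ Y = c⁻¹ * frobInner X₀ Y := by rw [one_div]
  linarith [hge, hD_le]
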